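/- Let K(ObC) be the free vector space over a characteristic-0 field spanned by all integer partitions, with U(λ) = Σ_μ u(λ;μ)μ where u(λ;μ) = 1 if μ is λ with a new part of size 1 added, u(λ;μ) = m_k(λ) if μ is obtained by increasing a part of size k in λ to k+1, and 0 otherwise; and D(λ) = Σ_ν d(ν;λ)ν where d(ν;λ) = m_1(λ) if λ is ν with a new part 1 added, and d(ν;λ) = m_{k+1}(λ) if λ is obtained by increasing a part of size k of ν to k+1. Then (DU − UD)(λ) = (1 + m₁(λ))·λ for every partition λ, where m₁(λ) is the number of parts of λ equal to 1. -/

import Mathlib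

/-! Statement 16: Kingman's branching on integer partitions. A partition is a
finite multiset of positive natural numbers; `m_k(λ)` is `λ.count k`. -/

namespace PartitionUD

/-- `U(λ) = Σ_μ u(λ;μ)·μ`: adding a new part `1` with multiplicity `1`, and
increasing a part of size `k` to `k+1` with multiplicity `m_k(λ)`. -/
noncomputable def Uvec (lam : Multiset ℕ) : Multiset ℕ →₀ ℚ :=
  Finsupp.single (1 ::ₘ lam) 1 +
    ∑ k ∈ lam.toFinset,
      (lam.count k : ℚ) • Finsupp.single ((k + 1) ::ₘ lam.erase k) 1

/-- `D(λ) = Σ_ν d(ν;λ)·ν`: removing a part `1` with multiplicity `m_1(λ)`,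
and decreasing a part of size `k ≥ 2` to `k−1` with multiplicity `m_k(λ)`
(so that `d(ν;λ) = m_{j+1}(λ)` when `λ` is obtained from `ν` by increasing a
part of size `j` to `j+1`). -/
noncomputable def Dvec (lam : Multiset ℕ) : Multiset ℕ →₀ ℚ :=
  (lam.count 1 : ℚ) • Finsupp.single (lam.erase 1) 1 +
    ∑ k ∈ lam.toFinset.filter (fun k => 2 ≤ k),
      (lam.count k : ℚ) • Finsupp.single ((k - 1) ::ₘ lam.erase k) 1

/-- The up operator on the free vector space on partitions. -/
noncomputable def Uop : (Multiset ℕ →₀ ℚ) →ₗ[ℚ] (Multiset ℕ →₀ ℚ) :=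
  Finsupp.lsum ℚ fun lam => LinearMap.toSpanSingleton ℚ _ (Uvec lam)

/-- The down operator on the free vector space on partitions. -/
noncomputable def Dop : (Multiset ℕ →₀ ℚ) →ₗ[ℚ] (Multiset ℕ →₀ ℚ) :=
  Finsupp.lsum ℚ fun lam => LinearMap.toSpanSingleton ℚ _ (Dvec lam)

/-! ### Auxiliary lemmas -/

lemma Uvec_eq (lam : Multiset ℕ) :
    Uvec lam = Finsupp.single (1 ::ₘ lam) 1 +
      (lam.map fun k => Finsupp.single ((k + 1) ::ₘ lam.erase k) (1 : ℚ)).sum := by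
  rw [Uvec, Finset.sum_multiset_map_count]
  congr 1

lemma Dvec_eq (lam : Multiset ℕ) :
    Dvec lam = (lam.count 1 : ℚ) • Finsupp.single (lam.erase 1) 1 +
      ((lam.filter (fun k => 2 ≤ k)).map
        fun k => Finsupp.single ((k - 1) ::ₘ lam.erase k) (1 : ℚ)).sum := by
  rw [Dvec, Finset.sum_multiset_map_count, Multiset.toFinset_filter]
  congr 1
  refine Finset.sum_congr rfl fun k hk => ?_
  rw [Finset.mem_filter] at hk
  rw [Multiset.count_filter, if_pos hk.2, Nat.cast_smul_eq_nsmul]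

lemma erase_cons_mem {n k : ℕ} {lam : Multiset ℕ} (hk : k ∈ lam) :
    (n ::ₘ lam).erase k = n ::ₘ lam.erase k := by
  rcases eq_or_ne k n with rfl | h
  · rw [Multiset.erase_cons_head, Multiset.cons_erase hk]
  · rw [Multiset.erase_cons_tail _ h.symm]

lemma mapDomain_msum (g : Multiset ℕ → Multiset ℕ) (s : Multiset (Multiset ℕ →₀ ℚ)) :
    Finsupp.mapDomain g s.sum = (s.map (Finsupp.mapDomain g)).sum :=
  map_multiset_sum (Finsupp.mapDomain.addMonoidHom g) s

lemma Uvec_cons (n : ℕ) (lam : Multiset ℕ) :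
    Uvec (n ::ₘ lam) = Finsupp.mapDomain (n ::ₘ ·) (Uvec lam) +
      Finsupp.single ((n + 1) ::ₘ lam) 1 := by
  rw [Uvec_eq, Uvec_eq, Finsupp.mapDomain_add, mapDomain_msum, Multiset.map_map,
    Finsupp.mapDomain_single, Multiset.map_cons, Multiset.sum_cons,
    Multiset.erase_cons_head]
  have h1 : (1 : ℕ) ::ₘ n ::ₘ lam = n ::ₘ 1 ::ₘ lam := Multiset.cons_swap _ _ _
  have h2 : (lam.map fun k => Finsupp.single ((k + 1) ::ₘ (n ::ₘ lam).erase k) (1 : ℚ))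
      = lam.map ((Finsupp.mapDomain (n ::ₘ ·)) ∘
        fun k => Finsupp.single ((k + 1) ::ₘ lam.erase k) (1 : ℚ)) := by
    refine Multiset.map_congr rfl fun k hk => ?_
    simp only [Function.comp_apply, Finsupp.mapDomain_single, erase_cons_mem hk,
      Multiset.cons_swap]
  rw [h1, h2]
  abel

lemma Dvec_cons_one (lam : Multiset ℕ) :
    Dvec (1 ::ₘ lam) = Finsupp.mapDomain (1 ::ₘ ·) (Dvec lam) +
      Finsupp.single lam 1 := by
  rw [Dvec_eq, Dvec_eq, Finsupp.mapDomain_add, Finsupp.mapDomain_smul, mapDomain_msum,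
    Multiset.map_map, Finsupp.mapDomain_single, Multiset.erase_cons_head,
    Multiset.count_cons_self]
  have hfil : (1 ::ₘ lam).filter (fun k => 2 ≤ k) = lam.filter (fun k => 2 ≤ k) := by
    rw [Multiset.filter_cons_of_neg]; omega
  have h2 : ((lam.filter (fun k => 2 ≤ k)).map
        fun k => Finsupp.single ((k - 1) ::ₘ (1 ::ₘ lam).erase k) (1 : ℚ))
      = (lam.filter (fun k => 2 ≤ k)).map ((Finsupp.mapDomain (1 ::ₘ ·)) ∘
        fun k => Finsupp.single ((k - 1) ::ₘ lam.erase k) (1 : ℚ)) := by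
    refine Multiset.map_congr rfl fun k hk => ?_
    simp only [Function.comp_apply, Finsupp.mapDomain_single,
      erase_cons_mem (Multiset.mem_of_mem_filter hk), Multiset.cons_swap]
  have h3 : (lam.count 1 : ℚ) • Finsupp.single ((1 : ℕ) ::ₘ lam.erase 1) (1 : ℚ)
      = (lam.count 1 : ℚ) • Finsupp.single lam 1 := by
    rcases Nat.eq_zero_or_pos (lam.count 1) with h | h
    · simp [h]
    · rw [Multiset.cons_erase (Multiset.count_pos.mp h)]
  rw [hfil, h2, h3]
  push_cast
  rw [add_smul, one_smul]
  abel

lemma Dvec_cons (n : ℕ) (hn : 2 ≤ n) (lam : Multiset ℕ) :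
    Dvec (n ::ₘ lam) = Finsupp.mapDomain (n ::ₘ ·) (Dvec lam) +
      Finsupp.single ((n - 1) ::ₘ lam) 1 := by
  rw [Dvec_eq, Dvec_eq, Finsupp.mapDomain_add, Finsupp.mapDomain_smul, mapDomain_msum,
    Multiset.map_map, Finsupp.mapDomain_single]
  have hne : (1 : ℕ) ≠ n := by omega
  rw [Multiset.count_cons_of_ne hne, Multiset.erase_cons_tail _ (by omega)]
  have hfil : (n ::ₘ lam).filter (fun k => 2 ≤ k) = n ::ₘ lam.filter (fun k => 2 ≤ k) :=
    Multiset.filter_cons_of_pos _ hn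
  have h2 : ((lam.filter (fun k => 2 ≤ k)).map
        fun k => Finsupp.single ((k - 1) ::ₘ (n ::ₘ lam).erase k) (1 : ℚ))
      = (lam.filter (fun k => 2 ≤ k)).map ((Finsupp.mapDomain (n ::ₘ ·)) ∘
        fun k => Finsupp.single ((k - 1) ::ₘ lam.erase k) (1 : ℚ)) := by
    refine Multiset.map_congr rfl fun k hk => ?_
    simp only [Function.comp_apply, Finsupp.mapDomain_single,
      erase_cons_mem (Multiset.mem_of_mem_filter hk), Multiset.cons_swap]
  rw [hfil, Multiset.map_cons, Multiset.sum_cons, Multiset.erase_cons_head, h2]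
  abel

lemma Uop_single (a : Multiset ℕ) (b : ℚ) :
    Uop (Finsupp.single a b) = b • Uvec a := by
  rw [Uop, Finsupp.lsum_single, LinearMap.toSpanSingleton_apply]

lemma Dop_single (a : Multiset ℕ) (b : ℚ) :
    Dop (Finsupp.single a b) = b • Dvec a := by
  rw [Dop, Finsupp.lsum_single, LinearMap.toSpanSingleton_apply]

lemma Uop_mapDomain (n : ℕ) (f : Multiset ℕ →₀ ℚ) :
    Uop (Finsupp.mapDomain (n ::ₘ ·) f) =
      Finsupp.mapDomain (n ::ₘ ·) (Uop f) + Finsupp.mapDomain ((n + 1) ::ₘ ·) f := by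
  induction f using Finsupp.induction_linear with
  | zero => simp
  | add f g hf hg =>
      rw [Finsupp.mapDomain_add, map_add, hf, hg, map_add, Finsupp.mapDomain_add,
        Finsupp.mapDomain_add]
      abel
  | single a b =>
      rw [Finsupp.mapDomain_single, Uop_single, Uvec_cons, Uop_single,
        Finsupp.mapDomain_smul, Finsupp.mapDomain_single, smul_add,
        Finsupp.smul_single']
      simp

lemma Dop_mapDomain_one (f : Multiset ℕ →₀ ℚ) :
    Dop (Finsupp.mapDomain ((1 : ℕ) ::ₘ ·) f) =
      Finsupp.mapDomain ((1 : ℕ) ::ₘ ·) (Dop f) + f := by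
  induction f using Finsupp.induction_linear with
  | zero => simp
  | add f g hf hg =>
      rw [Finsupp.mapDomain_add, map_add, hf, hg, map_add, Finsupp.mapDomain_add]
      abel
  | single a b =>
      rw [Finsupp.mapDomain_single, Dop_single, Dvec_cons_one, Dop_single,
        Finsupp.mapDomain_smul, smul_add, Finsupp.smul_single']
      simp

lemma Dop_mapDomain (n : ℕ) (hn : 2 ≤ n) (f : Multiset ℕ →₀ ℚ) :
    Dop (Finsupp.mapDomain (n ::ₘ ·) f) =
      Finsupp.mapDomain (n ::ₘ ·) (Dop f) + Finsupp.mapDomain ((n - 1) ::ₘ ·) f := by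
  induction f using Finsupp.induction_linear with
  | zero => simp
  | add f g hf hg =>
      rw [Finsupp.mapDomain_add, map_add, hf, hg, map_add, Finsupp.mapDomain_add,
        Finsupp.mapDomain_add]
      abel
  | single a b =>
      rw [Finsupp.mapDomain_single, Dop_single, Dvec_cons n hn, Dop_single,
        Finsupp.mapDomain_smul, Finsupp.mapDomain_single, smul_add,
        Finsupp.smul_single']
      simp

/-- `(DU − UD)(λ) = (1 + m₁(λ))·λ` for every integer partition `λ`. -/
theorem commutator_eq (lam : Multiset ℕ) (hpos : ∀ k ∈ lam, 0 < k) :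
    Dop (Uop (Finsupp.single lam 1)) - Uop (Dop (Finsupp.single lam 1)) =
      (1 + (lam.count 1 : ℚ)) • Finsupp.single lam 1 := by
  induction lam using Multiset.induction with
  | empty =>
      have hU : Uop (Finsupp.single (0 : Multiset ℕ) 1) =
          Finsupp.single ((1 : ℕ) ::ₘ 0) 1 := by
        rw [Uop_single, one_smul, Uvec]; simp
      have hD : Dop (Finsupp.single (0 : Multiset ℕ) 1) = 0 := by
        rw [Dop_single, one_smul, Dvec]; simp
      rw [hU, hD, map_zero, Dop_single, one_smul, Dvec_cons_one]
      have : Dvec (0 : Multiset ℕ) = 0 := by rw [Dvec]; simp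
      simp [this]
  | cons n lam ih =>
      have hn : 0 < n := hpos n (Multiset.mem_cons_self n lam)
      have ih' := ih (fun k hk => hpos k (Multiset.mem_cons_of_mem hk))
      set s : Multiset ℕ →₀ ℚ := Finsupp.single lam 1 with hs
      have hkey : Dop (Uop s) = Uop (Dop s) + (1 + (lam.count 1 : ℚ)) • s := by
        rw [← ih']; abel
      have hsingle : Finsupp.single (n ::ₘ lam) (1 : ℚ) =
          Finsupp.mapDomain (n ::ₘ ·) s := by
        rw [hs, Finsupp.mapDomain_single]
      rcases Nat.lt_or_ge n 2 with h1 | h2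
      · -- n = 1
        obtain rfl : n = 1 := by omega
        rw [hsingle, Uop_mapDomain 1 s, Dop_mapDomain_one s, map_add, map_add,
          Dop_mapDomain_one (Uop s), Dop_mapDomain 2 le_rfl s,
          Uop_mapDomain 1 (Dop s), hkey]
        have h21 : (2 : ℕ) - 1 = 1 := rfl
        simp only [h21, Finsupp.mapDomain_add, Finsupp.mapDomain_smul,
          Multiset.count_cons_self]
        push_cast
        module
      · -- 2 ≤ n
        rw [hsingle, Uop_mapDomain n s, Dop_mapDomain n h2 s, map_add, map_add,
          Dop_mapDomain n h2 (Uop s), Dop_mapDomain (n + 1) (by omega) s,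
          Uop_mapDomain n (Dop s), Uop_mapDomain (n - 1) s, hkey]
        have hrw : n - 1 + 1 = n := by omega
        have hrw2 : n + 1 - 1 = n := by omega
        have hc : ((n ::ₘ lam).count 1 : ℚ) = (lam.count 1 : ℚ) := by
          rw [Multiset.count_cons_of_ne (by omega)]
        rw [hrw, hrw2]
        simp only [Finsupp.mapDomain_add, Finsupp.mapDomain_smul, hc]
        module

end PartitionUD
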